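/- Let H : ℝ² → ℝ² be of class C² on an open set U (all second partial derivatives exist and are continuous), let F = (M,N) be a differentiable vector field defined on H(U), and define F̂ on U by F̂(x) = (DH(x))ᵀ · F(H(x)). Then for every x ∈ U, scurl F̂(x) = scurl F(H(x)) · det DH(x). -/

import Mathlib

/-- The Euclidean dot product on `ℝ × ℝ`. -/
def dot (u v : ℝ × ℝ) : ℝ := u.1 * v.1 + u.2 * v.2

lemma det_apply_two (f : (ℝ×ℝ) →L[ℝ] (ℝ×ℝ)) :
    f.det = (f (1,0)).1 * (f (0,1)).2 - (f (0,1)).1 * (f (1,0)).2 := by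
  rw [ContinuousLinearMap.det, ← LinearMap.det_toMatrix (Module.Basis.finTwoProd ℝ), Matrix.det_fin_two]
  simp [LinearMap.toMatrix_apply, Module.Basis.finTwoProd]

lemma clm_decomp (φ : (ℝ×ℝ) →L[ℝ] ℝ) (v : ℝ×ℝ) :
    φ v = v.1 * φ (1,0) + v.2 * φ (0,1) := by
  have h : v = v.1 • ((1:ℝ),(0:ℝ)) + v.2 • ((0:ℝ),(1:ℝ)) := by
    simp [Prod.ext_iff]
  conv_lhs => rw [h]
  rw [map_add, map_smul, map_smul, smul_eq_mul, smul_eq_mul]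

/-- Let `H` be of class C² on an open set `U`, let `F = (M, N)` be a
differentiable vector field on `H(U)`, and let `F̂ (x) = (DH(x))ᵀ F(H x)` be the
pulled-back vector field on `U`.  Then at every `x ∈ U`,
`scurl F̂ (x) = scurl F (H x) · det DH(x)`. -/
theorem scurl_pullback
    (U : Set (ℝ × ℝ)) (hU : IsOpen U)
    (H : ℝ × ℝ → ℝ × ℝ) (hH : ContDiffOn ℝ 2 H U)
    (M N : ℝ × ℝ → ℝ)
    (hM : ∀ y ∈ H '' U, DifferentiableAt ℝ M y)
    (hN : ∀ y ∈ H '' U, DifferentiableAt ℝ N y)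
    (Fhat : ℝ × ℝ → ℝ × ℝ)
    (hFhat : ∀ x ∈ U,
      Fhat x = (dot (M (H x), N (H x)) (fderiv ℝ H x (1, 0)),
                dot (M (H x), N (H x)) (fderiv ℝ H x (0, 1)))) :
    ∀ x ∈ U,
      fderiv ℝ (fun p => (Fhat p).2) x (1, 0)
          - fderiv ℝ (fun p => (Fhat p).1) x (0, 1)
        = (fderiv ℝ N (H x) (1, 0) - fderiv ℝ M (H x) (0, 1))
            * (fderiv ℝ H x).det := by
  intro x hx
  have hxU : U ∈ nhds x := hU.mem_nhds hx
  have hHx : ContDiffAt ℝ 2 H x := hH.contDiffAt hxU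
  have hH1 : DifferentiableAt ℝ H x := hHx.differentiableAt two_ne_zero
  have hH' : DifferentiableAt ℝ (fderiv ℝ H) x :=
    (hHx.fderiv_right (le_refl 2)).differentiableAt one_ne_zero
  set L := fderiv ℝ H x with hLdef
  set A := fderiv ℝ (fderiv ℝ H) x with hAdef
  -- Schwarz symmetry
  have hev : ∀ᶠ y in nhds x, HasFDerivAt H (fderiv ℝ H y) y := by
    filter_upwards [hxU] with y hy
    exact ((hH.contDiffAt (hU.mem_nhds hy)).differentiableAt two_ne_zero).hasFDerivAt
  have hsymm : ∀ v w, A v w = A w v :=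
    second_derivative_symmetric_of_eventually hev hH'.hasFDerivAt
  -- differentiability of M, N at H x
  have hMx : DifferentiableAt ℝ M (H x) := hM _ ⟨x, hx, rfl⟩
  have hNx : DifferentiableAt ℝ N (H x) := hN _ ⟨x, hx, rfl⟩
  set M' := fderiv ℝ M (H x) with hM'def
  set N' := fderiv ℝ N (H x) with hN'def
  have hMH : HasFDerivAt (fun p => M (H p)) (M'.comp L) x :=
    hMx.hasFDerivAt.comp x hH1.hasFDerivAt
  have hNH : HasFDerivAt (fun p => N (H p)) (N'.comp L) x :=
    hNx.hasFDerivAt.comp x hH1.hasFDerivAt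
  -- derivative of p ↦ fderiv ℝ H p v
  have hcol : ∀ v : ℝ × ℝ, HasFDerivAt (fun p => fderiv ℝ H p v)
      ((ContinuousLinearMap.apply ℝ (ℝ×ℝ) v).comp A) x := fun v =>
    (ContinuousLinearMap.apply ℝ (ℝ×ℝ) v).hasFDerivAt.comp x hH'.hasFDerivAt
  -- component derivatives
  have hD2 : HasFDerivAt (fun p => M (H p) * (fderiv ℝ H p (0,1)).1
        + N (H p) * (fderiv ℝ H p (0,1)).2)
      ((M (H x) • ((ContinuousLinearMap.fst ℝ ℝ ℝ).comp
          ((ContinuousLinearMap.apply ℝ (ℝ×ℝ) (0,1)).comp A))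
        + (fderiv ℝ H x (0,1)).1 • (M'.comp L))
       + (N (H x) • ((ContinuousLinearMap.snd ℝ ℝ ℝ).comp
          ((ContinuousLinearMap.apply ℝ (ℝ×ℝ) (0,1)).comp A))
        + (fderiv ℝ H x (0,1)).2 • (N'.comp L))) x :=
    (hMH.mul (hcol (0,1)).fst).add (hNH.mul (hcol (0,1)).snd)
  have hD1 : HasFDerivAt (fun p => M (H p) * (fderiv ℝ H p (1,0)).1
        + N (H p) * (fderiv ℝ H p (1,0)).2)
      ((M (H x) • ((ContinuousLinearMap.fst ℝ ℝ ℝ).comp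
          ((ContinuousLinearMap.apply ℝ (ℝ×ℝ) (1,0)).comp A))
        + (fderiv ℝ H x (1,0)).1 • (M'.comp L))
       + (N (H x) • ((ContinuousLinearMap.snd ℝ ℝ ℝ).comp
          ((ContinuousLinearMap.apply ℝ (ℝ×ℝ) (1,0)).comp A))
        + (fderiv ℝ H x (1,0)).2 • (N'.comp L))) x :=
    (hMH.mul (hcol (1,0)).fst).add (hNH.mul (hcol (1,0)).snd)
  -- eventual equality
  have heq2 : (fun p => (Fhat p).2) =ᶠ[nhds x]
      (fun p => M (H p) * (fderiv ℝ H p (0,1)).1 + N (H p) * (fderiv ℝ H p (0,1)).2) := by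
    filter_upwards [hxU] with y hy
    rw [hFhat y hy]; simp [dot]
  have heq1 : (fun p => (Fhat p).1) =ᶠ[nhds x]
      (fun p => M (H p) * (fderiv ℝ H p (1,0)).1 + N (H p) * (fderiv ℝ H p (1,0)).2) := by
    filter_upwards [hxU] with y hy
    rw [hFhat y hy]; simp [dot]
  have e2 : fderiv ℝ (fun p => (Fhat p).2) x = _ := heq2.fderiv_eq.trans hD2.fderiv
  have e1 : fderiv ℝ (fun p => (Fhat p).1) x = _ := heq1.fderiv_eq.trans hD1.fderiv
  rw [e1, e2, det_apply_two]
  simp only [ContinuousLinearMap.add_apply, ContinuousLinearMap.smul_apply,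
    ContinuousLinearMap.coe_comp', Function.comp_apply,
    ContinuousLinearMap.apply_apply, ContinuousLinearMap.coe_fst',
    ContinuousLinearMap.coe_snd', smul_eq_mul]
  rw [hsymm (1,0) (0,1)]
  rw [clm_decomp M' (L (1,0)), clm_decomp M' (L (0,1)),
      clm_decomp N' (L (1,0)), clm_decomp N' (L (0,1))]
  ring
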